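/- If X_l ~ Gamma(α_l, λ_l) for l = 0, 1, 2 are independent, U = X₀ + X₁, and V = X₀ + X₂, then for variograms γ₁, γ₂ the mixture correlation is ρ(s,ξ) = (1 + (γ₁(s)+γ₂(ξ))/λ₀)^{−α₀} (1 + γ₁(s)/λ₁)^{−α₁} (1 + γ₂(ξ)/λ₂)^{−α₂}, and this is a valid (positive semidefinite) correlation function. -/

import Mathlib

open MeasureTheory ProbabilityTheory

/-- A (centered) variogram: a continuous, nonnegative, conditionally negative definite
function vanishing at the origin. -/
def IsVariogram {d : ℕ} (γ : (Fin d → ℝ) → ℝ) : Prop :=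
  Continuous γ ∧ γ 0 = 0 ∧ (∀ s, 0 ≤ γ s) ∧ (∀ s, γ (-s) = γ s) ∧
    ∀ (n : ℕ) (x : Fin n → (Fin d → ℝ)) (a : Fin n → ℝ),
      (∑ i, a i) = 0 → ∑ i, ∑ j, a i * a j * γ (x i - x j) ≤ 0

section Aux

open Finset Nat

/-- quadratic-form positive semidefiniteness of a kernel -/
def QuadPSD {n : ℕ} (K : Fin n → Fin n → ℝ) : Prop :=
  ∀ a : Fin n → ℝ, 0 ≤ ∑ i, ∑ j, a i * a j * K i j

lemma quadPSD_of_symm {n : ℕ} {K : Fin n → Fin n → ℝ}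
    (hsymm : ∀ i j, K i j = K j i) (hK : QuadPSD K) :
    (Matrix.of K).PosSemidef := by
  rw [Matrix.posSemidef_iff_dotProduct_mulVec]
  constructor
  · ext i j
    simp [Matrix.conjTranspose, Matrix.transpose, hsymm i j]
  · intro x
    have := hK x
    simpa [dotProduct, Matrix.mulVec, Finset.mul_sum, mul_comm, mul_assoc, mul_left_comm]
      using this

lemma schur {n : ℕ} {K L : Fin n → Fin n → ℝ}
    (hsymm : ∀ i j, K i j = K j i) (hK : QuadPSD K) (hL : QuadPSD L) :
    QuadPSD (fun i j => K i j * L i j) := by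
  intro a
  open scoped MatrixOrder in
  obtain ⟨B, hB⟩ := CStarAlgebra.nonneg_iff_eq_star_mul_self.mp (quadPSD_of_symm hsymm hK).nonneg
  have hKij : ∀ i j, K i j = ∑ m, B m i * B m j := by
    intro i j
    have h2 : (Matrix.of K) i j = (B.conjTranspose * B) i j := by rw [hB]; rfl
    simpa [Matrix.mul_apply, Matrix.conjTranspose_apply] using h2
  show 0 ≤ ∑ i, ∑ j, a i * a j * (K i j * L i j)
  calc (0:ℝ) ≤ ∑ m, ∑ i, ∑ j, (a i * B m i) * (a j * B m j) * L i j :=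
        Finset.sum_nonneg fun m _ => hL (fun i => a i * B m i)
    _ = ∑ i, ∑ j, a i * a j * (K i j * L i j) := by
        rw [Finset.sum_comm]
        refine Finset.sum_congr rfl fun i _ => ?_
        rw [Finset.sum_comm]
        refine Finset.sum_congr rfl fun j _ => ?_
        rw [hKij i j, Finset.sum_mul, Finset.mul_sum]
        exact Finset.sum_congr rfl fun m _ => by ring

lemma quadPSD_pow {n : ℕ} {K : Fin n → Fin n → ℝ}
    (hsymm : ∀ i j, K i j = K j i) (hK : QuadPSD K) (m : ℕ) :
    QuadPSD (fun i j => K i j ^ m) := by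
  induction m with
  | zero =>
    intro a
    simp only [pow_zero, mul_one]
    calc (0:ℝ) ≤ (∑ i, a i) ^ 2 := sq_nonneg _
      _ = ∑ i, ∑ j, a i * a j := by rw [sq, Finset.sum_mul_sum]
  | succ m ih =>
    have := schur hsymm hK ih
    intro a
    have h2 := this a
    simp only [pow_succ] at *
    calc (0:ℝ) ≤ ∑ i, ∑ j, a i * a j * (K i j * K i j ^ m) := h2
      _ = ∑ i, ∑ j, a i * a j * (K i j ^ m * K i j) := by
        exact Finset.sum_congr rfl fun i _ => Finset.sum_congr rfl fun j _ => by ring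

lemma quadPSD_exp {n : ℕ} {K : Fin n → Fin n → ℝ}
    (hsymm : ∀ i j, K i j = K j i) (hK : QuadPSD K) :
    QuadPSD (fun i j => Real.exp (K i j)) := by
  intro a
  show 0 ≤ ∑ i, ∑ j, a i * a j * Real.exp (K i j)
  have hexp : ∀ x : ℝ, Real.exp x = ∑' m : ℕ, x ^ m / m ! := by
    intro x
    rw [Real.exp_eq_exp_ℝ, NormedSpace.exp_eq_tsum_div]
  have hsummable : ∀ i j : Fin n, Summable (fun m : ℕ => a i * a j * (K i j ^ m / m !)) :=
    fun i j => (Real.summable_pow_div_factorial (K i j)).mul_left _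
  calc (0:ℝ) ≤ ∑' m : ℕ, ∑ i, ∑ j, a i * a j * (K i j ^ m / m !) := by
        refine tsum_nonneg fun m => ?_
        have : ∀ i j, a i * a j * (K i j ^ m / m !) = a i * a j * K i j ^ m / m ! := by
          intros; ring
        simp_rw [this, ← Finset.sum_div]
        exact div_nonneg (quadPSD_pow hsymm hK m a) (by positivity)
    _ = ∑ i, ∑ j, ∑' m : ℕ, a i * a j * (K i j ^ m / m !) := by
        rw [Summable.tsum_finsetSum fun i (_ : i ∈ Finset.univ) => summable_sum fun j (_ : j ∈ Finset.univ) => hsummable i j]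
        exact Finset.sum_congr rfl fun i _ => Summable.tsum_finsetSum fun j _ => hsummable i j
    _ = ∑ i, ∑ j, a i * a j * Real.exp (K i j) := by
        refine Finset.sum_congr rfl fun i _ => Finset.sum_congr rfl fun j _ => ?_
        rw [tsum_mul_left, hexp]

/-- the kernel `u * (γ (x i) + γ (x j) - γ (x i - x j))` is PSD -/
lemma quadPSD_psi {d n : ℕ} {γ : (Fin d → ℝ) → ℝ} (hγ : IsVariogram γ)
    {u : ℝ} (hu : 0 ≤ u) (x : Fin n → (Fin d → ℝ)) :
    QuadPSD (fun i j => u * (γ (x i) + γ (x j) - γ (x i - x j))) := by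
  obtain ⟨-, h0, -, hsym, hcnd⟩ := hγ
  intro b
  set S := ∑ i, b i with hS
  set T := ∑ i, b i * γ (x i) with hT
  set Q := ∑ i, ∑ j, b i * b j * γ (x i - x j) with hQ
  have key : Q - 2 * S * T ≤ 0 := by
    have h := hcnd (n + 1) (Fin.cons 0 x) (Fin.cons (-S) b) (by simp [Fin.sum_cons, hS])
    simp only [Fin.sum_univ_succ, Fin.cons_zero, Fin.cons_succ, sub_self, sub_zero, zero_sub,
      h0, hsym, mul_zero, zero_mul, zero_add] at h
    have e1 : ∑ j, -S * b j * γ (x j) = -(S * T) := by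
      have h1 : ∀ j : Fin n, -S * b j * γ (x j) = -(S * (b j * γ (x j))) := fun j => by ring
      simp_rw [h1, Finset.sum_neg_distrib, ← Finset.mul_sum]
      rw [← hT]
    have e2 : ∑ i, (b i * -S * γ (x i) + ∑ j, b i * b j * γ (x i - x j))
        = -(S * T) + Q := by
      rw [Finset.sum_add_distrib, ← hQ]
      congr 1
      have h1 : ∀ i : Fin n, b i * -S * γ (x i) = -(S * (b i * γ (x i))) := fun i => by ring
      simp_rw [h1, Finset.sum_neg_distrib, ← Finset.mul_sum]
      rw [← hT]
    rw [e1, e2] at h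
    linarith
  have expand : ∑ i, ∑ j, b i * b j * (u * (γ (x i) + γ (x j) - γ (x i - x j)))
      = u * (2 * S * T - Q) := by
    have : ∀ i j, b i * b j * (u * (γ (x i) + γ (x j) - γ (x i - x j)))
        = u * ((b i * γ (x i)) * b j) + u * (b i * (b j * γ (x j)))
          - u * (b i * b j * γ (x i - x j)) := fun i j => by ring
    simp_rw [this, Finset.sum_sub_distrib, Finset.sum_add_distrib, ← Finset.mul_sum,
      ← Finset.sum_mul]
    rw [← hS, ← hT, ← hQ]
    ring
  rw [expand]
  nlinarith

lemma variogram_sub_symm {d : ℕ} {γ : (Fin d → ℝ) → ℝ} (hγ : IsVariogram γ)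
    (y z : Fin d → ℝ) : γ (y - z) = γ (z - y) := by
  rw [← hγ.2.2.2.1 (z - y), neg_sub]

lemma quadPSD_exp_neg_variogram {d n : ℕ} {γ : (Fin d → ℝ) → ℝ} (hγ : IsVariogram γ)
    {u : ℝ} (hu : 0 ≤ u) (x : Fin n → (Fin d → ℝ)) :
    QuadPSD (fun i j => Real.exp (-(u * γ (x i - x j)))) := by
  have hψsymm : ∀ i j, u * (γ (x i) + γ (x j) - γ (x i - x j))
      = u * (γ (x j) + γ (x i) - γ (x j - x i)) := by
    intro i j
    rw [variogram_sub_symm hγ (x i) (x j)]; ring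
  have hexpψ := quadPSD_exp hψsymm (quadPSD_psi hγ hu x)
  intro a
  have h := hexpψ (fun i => a i * Real.exp (-(u * γ (x i))))
  refine le_of_le_of_eq h (Finset.sum_congr rfl fun i _ => Finset.sum_congr rfl fun j _ => ?_)
  show a i * Real.exp (-(u * γ (x i))) * (a j * Real.exp (-(u * γ (x j))))
      * Real.exp (u * (γ (x i) + γ (x j) - γ (x i - x j)))
      = a i * a j * Real.exp (-(u * γ (x i - x j)))
  calc a i * Real.exp (-(u * γ (x i))) * (a j * Real.exp (-(u * γ (x j))))
      * Real.exp (u * (γ (x i) + γ (x j) - γ (x i - x j)))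
      = a i * a j * Real.exp (-(u * γ (x i))
          + (-(u * γ (x j)) + u * (γ (x i) + γ (x j) - γ (x i - x j)))) := by
        rw [Real.exp_add, Real.exp_add]; ring
    _ = a i * a j * Real.exp (-(u * γ (x i - x j))) := by
        rw [show -(u * γ (x i)) + (-(u * γ (x j)) + u * (γ (x i) + γ (x j) - γ (x i - x j)))
          = -(u * γ (x i - x j)) from by ring]

lemma quadPSD_prod_exp {d k n : ℕ} {γ₁ : (Fin d → ℝ) → ℝ} {γ₂ : (Fin k → ℝ) → ℝ}
    (hγ₁ : IsVariogram γ₁) (hγ₂ : IsVariogram γ₂) {u v : ℝ} (hu : 0 ≤ u) (hv : 0 ≤ v)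
    (s : Fin n → (Fin d → ℝ)) (ξ : Fin n → (Fin k → ℝ)) (a : Fin n → ℝ) :
    0 ≤ ∑ i, ∑ j, a i * a j * Real.exp (-γ₁ (s i - s j) * u - γ₂ (ξ i - ξ j) * v) := by
  have hKsymm : ∀ i j, Real.exp (-(u * γ₁ (s i - s j))) = Real.exp (-(u * γ₁ (s j - s i))) := by
    intro i j; rw [variogram_sub_symm hγ₁ (s i) (s j)]
  have h := schur hKsymm (quadPSD_exp_neg_variogram hγ₁ hu s)
    (quadPSD_exp_neg_variogram hγ₂ hv ξ) a
  refine le_of_le_of_eq h (Finset.sum_congr rfl fun i _ => Finset.sum_congr rfl fun j _ => ?_)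
  show a i * a j * (Real.exp (-(u * γ₁ (s i - s j))) * Real.exp (-(v * γ₂ (ξ i - ξ j))))
      = a i * a j * Real.exp (-γ₁ (s i - s j) * u - γ₂ (ξ i - ξ j) * v)
  rw [← Real.exp_add]
  ring_nf

lemma exp_mul_gammaPDFReal {a r t : ℝ} (ha : 0 < a) (hr : 0 < r) (ht : t ≤ 0) (x : ℝ) :
    Real.exp (t * x) * gammaPDFReal a r x
      = (r / (r - t)) ^ a * gammaPDFReal a (r - t) x := by
  have hrt : (0:ℝ) < r - t := by linarith
  have hne : ((r - t):ℝ) ^ a ≠ 0 := (Real.rpow_pos_of_pos hrt a).ne'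
  unfold ProbabilityTheory.gammaPDFReal
  split_ifs with hx
  · have h1 : Real.exp (t * x) * Real.exp (-(r * x)) = Real.exp (-((r - t) * x)) := by
      rw [← Real.exp_add]; ring_nf
    rw [Real.div_rpow hr.le hrt.le]
    field_simp
    rw [show Real.exp (-(x * (r - t))) = Real.exp (t * x) * Real.exp (-(x * r)) by
      rw [← Real.exp_add]; ring_nf]
    ring
  · simp

lemma integral_exp_gammaMeasure {a r t : ℝ} (ha : 0 < a) (hr : 0 < r) (ht : t ≤ 0) :
    ∫ x, Real.exp (t * x) ∂(gammaMeasure a r) = (1 - t / r) ^ (-a) := by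
  have hrt : (0:ℝ) < r - t := by linarith
  have hmeas : Measurable fun x : ℝ => Real.exp (t * x) :=
    (measurable_const_mul t).exp
  have h1 : ∫ x, Real.exp (t * x) ∂(gammaMeasure a r)
      = (∫⁻ x, ENNReal.ofReal (Real.exp (t * x)) ∂(gammaMeasure a r)).toReal := by
    rw [integral_eq_lintegral_of_nonneg_ae (ae_of_all _ fun x => (Real.exp_pos _).le)
      hmeas.aestronglyMeasurable]
  have h2 : ∫⁻ x, ENNReal.ofReal (Real.exp (t * x)) ∂(gammaMeasure a r)
      = ∫⁻ x, (gammaPDF a r x * ENNReal.ofReal (Real.exp (t * x))) := by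
    have hpdfmeas : Measurable (gammaPDF a r) := (measurable_gammaPDFReal a r).ennreal_ofReal
    rw [gammaMeasure, lintegral_withDensity_eq_lintegral_mul _ hpdfmeas hmeas.ennreal_ofReal]
    rfl
  have h3 : ∀ x, gammaPDF a r x * ENNReal.ofReal (Real.exp (t * x))
      = ENNReal.ofReal ((r / (r - t)) ^ a) * gammaPDF a (r - t) x := by
    intro x
    rw [gammaPDF, gammaPDF, ← ENNReal.ofReal_mul (gammaPDFReal_nonneg ha hr x),
      ← ENNReal.ofReal_mul (by positivity)]
    congr 1
    rw [mul_comm, exp_mul_gammaPDFReal ha hr ht]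
  rw [h1, h2]
  simp_rw [h3]
  have hpdfmeas2 : Measurable (gammaPDF a (r - t)) :=
    (measurable_gammaPDFReal a (r - t)).ennreal_ofReal
  rw [lintegral_const_mul _ hpdfmeas2,
    lintegral_gammaPDF_eq_one ha hrt, mul_one, ENNReal.toReal_ofReal (by positivity)]
  rw [show (1:ℝ) - t / r = (r - t) / r by field_simp,
    Real.rpow_neg (by positivity), ← Real.inv_rpow (by positivity), inv_div]

end Aux

/-- If `X l ~ Gamma(α l, l l)` for `l = 0, 1, 2` are independent, `U = X₀ + X₁` and
`V = X₀ + X₂`, then for variograms `γ₁, γ₂` the mixture correlation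
`ρ(s,ξ) = E[exp(-γ₁(s) U - γ₂(ξ) V)]` equals
`(1 + (γ₁(s)+γ₂(ξ))/λ₀)^(-α₀) (1 + γ₁(s)/λ₁)^(-α₁) (1 + γ₂(ξ)/λ₂)^(-α₂)`, and this is a
valid (positive semidefinite) correlation function. -/
theorem gamma_mixture_correlation {d k : ℕ}
    {Ω : Type*} [MeasurableSpace Ω] (μ : Measure Ω) [IsProbabilityMeasure μ]
    (X : Fin 3 → Ω → ℝ) (hmeas : ∀ l, Measurable (X l))
    (α lam : Fin 3 → ℝ) (hα : ∀ l, 0 < α l) (hlam : ∀ l, 0 < lam l)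
    (hGamma : ∀ l, Measure.map (X l) μ = gammaMeasure (α l) (lam l))
    (hIndep : iIndepFun X μ)
    (γ₁ : (Fin d → ℝ) → ℝ) (γ₂ : (Fin k → ℝ) → ℝ)
    (hγ₁ : IsVariogram γ₁) (hγ₂ : IsVariogram γ₂)
    (ρ : (Fin d → ℝ) → (Fin k → ℝ) → ℝ)
    (hρ : ∀ s ξ, ρ s ξ
      = ∫ ω, Real.exp (-γ₁ s * (X 0 ω + X 1 ω) - γ₂ ξ * (X 0 ω + X 2 ω)) ∂μ) :
    (∀ (s : Fin d → ℝ) (ξ : Fin k → ℝ),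
        ρ s ξ = (1 + (γ₁ s + γ₂ ξ) / lam 0) ^ (-(α 0))
          * (1 + γ₁ s / lam 1) ^ (-(α 1)) * (1 + γ₂ ξ / lam 2) ^ (-(α 2))) ∧
      ∀ (n : ℕ) (s : Fin n → (Fin d → ℝ)) (ξ : Fin n → (Fin k → ℝ)) (a : Fin n → ℝ),
        0 ≤ ∑ i, ∑ j, a i * a j * ρ (s i - s j) (ξ i - ξ j) := by
  have hae : ∀ l, ∀ᵐ ω ∂μ, 0 ≤ X l ω := by
    intro l
    have hset : μ (X l ⁻¹' Set.Iio 0) = 0 := by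
      calc μ (X l ⁻¹' Set.Iio 0) = Measure.map (X l) μ (Set.Iio 0) :=
            (Measure.map_apply (hmeas l) measurableSet_Iio).symm
        _ = 0 := by
            rw [hGamma l, gammaMeasure, withDensity_apply _ measurableSet_Iio,
              lintegral_gammaPDF_of_nonpos le_rfl]
    have hsetEq : {ω | ¬ 0 ≤ X l ω} = X l ⁻¹' Set.Iio 0 := by
      ext ω; simp [not_le]
    rw [ae_iff, hsetEq]
    exact hset
  constructor
  · -- Part 1: closed form
    intro s ξ
    have hA : 0 ≤ γ₁ s := hγ₁.2.2.1 s
    have hB : 0 ≤ γ₂ ξ := hγ₂.2.2.1 ξ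
    set A := γ₁ s with hAdef
    set B := γ₂ ξ with hBdef
    set c : Fin 3 → ℝ := ![-(A + B), -A, -B] with hc
    set Y : Fin 3 → Ω → ℝ := fun l ω => c l * X l ω with hY
    have hYmeas : ∀ l, Measurable (Y l) := fun l => (hmeas l).const_mul _
    have hYindep : iIndepFun Y μ :=
      hIndep.comp (fun l x => c l * x) (fun l => measurable_const_mul _)
    have hc0 : c 0 = -(A + B) := rfl
    have hc1 : c 1 = -A := rfl
    have hc2 : c 2 = -B := rfl
    have h1 : ρ s ξ = mgf (∑ l, Y l) μ 1 := by
      rw [hρ, mgf]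
      refine integral_congr_ae (ae_of_all _ fun ω => ?_)
      refine congrArg Real.exp ?_
      simp only [Finset.sum_apply, Fin.sum_univ_three, hY, hc0, hc1, hc2, one_mul]
      ring
    have h2 : mgf (∑ l, Y l) μ 1 = ∏ l, mgf (Y l) μ 1 := hYindep.mgf_sum hYmeas Finset.univ
    have h3 : ∀ l, c l ≤ 0 → mgf (Y l) μ 1 = (1 - c l / lam l) ^ (-(α l)) := by
      intro l hcl
      have e1 : mgf (Y l) μ 1 = ∫ ω, Real.exp (c l * X l ω) ∂μ := by
        rw [mgf]; simp only [one_mul, hY]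
      have e2 : ∫ ω, Real.exp (c l * X l ω) ∂μ
          = ∫ x, Real.exp (c l * x) ∂(Measure.map (X l) μ) := by
        rw [integral_map (hmeas l).aemeasurable
          ((measurable_const_mul _).exp.aestronglyMeasurable)]
      rw [e1, e2, hGamma l, integral_exp_gammaMeasure (hα l) (hlam l) hcl]
    rw [h1, h2, Fin.prod_univ_three, h3 0 (by rw [hc0]; linarith), h3 1 (by rw [hc1]; linarith),
      h3 2 (by rw [hc2]; linarith), hc0, hc1, hc2]
    rw [neg_div, neg_div, neg_div, sub_neg_eq_add, sub_neg_eq_add, sub_neg_eq_add]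
  · -- Part 2: positive semidefiniteness
    intro n s ξ a
    have hint : ∀ c c' : ℝ, 0 ≤ c → 0 ≤ c' → Integrable
        (fun ω => Real.exp (-c * (X 0 ω + X 1 ω) - c' * (X 0 ω + X 2 ω))) μ := by
      intro c c' hc hc'
      have hm : Measurable fun ω => Real.exp (-c * (X 0 ω + X 1 ω) - c' * (X 0 ω + X 2 ω)) :=
        ((((hmeas 0).add (hmeas 1)).const_mul (-c)).sub
          (((hmeas 0).add (hmeas 2)).const_mul c')).exp
      refine Integrable.mono' (integrable_const 1) hm.aestronglyMeasurable ?_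
      filter_upwards [hae 0, hae 1, hae 2] with ω h0 h1 h2
      rw [Real.norm_eq_abs, abs_of_pos (Real.exp_pos _)]
      refine Real.exp_le_one_iff.mpr ?_
      nlinarith [mul_nonneg hc (add_nonneg h0 h1), mul_nonneg hc' (add_nonneg h0 h2)]
    have hintij : ∀ i j : Fin n, Integrable (fun ω =>
        Real.exp (-γ₁ (s i - s j) * (X 0 ω + X 1 ω) - γ₂ (ξ i - ξ j) * (X 0 ω + X 2 ω))) μ :=
      fun i j => hint _ _ (hγ₁.2.2.1 _) (hγ₂.2.2.1 _)
    have hswap : ∑ i, ∑ j, a i * a j * ρ (s i - s j) (ξ i - ξ j)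
        = ∫ ω, ∑ i, ∑ j, a i * a j *
            Real.exp (-γ₁ (s i - s j) * (X 0 ω + X 1 ω)
              - γ₂ (ξ i - ξ j) * (X 0 ω + X 2 ω)) ∂μ := by
      rw [integral_finset_sum _ (fun i _ => integrable_finset_sum _
        (fun j _ => (hintij i j).const_mul _))]
      refine Finset.sum_congr rfl fun i _ => ?_
      rw [integral_finset_sum _ (fun j _ => (hintij i j).const_mul _)]
      refine Finset.sum_congr rfl fun j _ => ?_
      rw [hρ, integral_const_mul]
    rw [hswap]
    refine integral_nonneg_of_ae ?_
    filter_upwards [hae 0, hae 1, hae 2] with ω h0 h1 h2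
    exact quadPSD_prod_exp hγ₁ hγ₂ (add_nonneg h0 h1) (add_nonneg h0 h2) s ξ a
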